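/- For all real numbers x, s with x ≥ 0, setting Z m = L (2m) (Real.sqrt x) s - 2·s^m, the following identity holds in the ring of formal power series ℝ⟦X⟧: (PowerSeries.mk (fun n => Z (n+1))) · (1 - (x + 3s)·X + s·(x + 3s)·X^2 - s^3·X^3) = x·(1 + s·X), where X is the power series variable and real numbers are embedded as constant power series. -/

import Mathlib

/-- Bivariate Lucas polynomials. -/
def L : ℕ → ℝ → ℝ → ℝ
  | 0, _, _ => 2
  | 1, x, _ => x
  | n + 2, x, s => x * L (n + 1) x s + s * L n x s

lemma L_rec4 (x s : ℝ) (n : ℕ) :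
    L (n + 4) x s = (x ^ 2 + 2 * s) * L (n + 2) x s - s ^ 2 * L n x s := by
  simp [L]; ring_nf

open PowerSeries in
theorem stmt_5 (x s : ℝ) (hx : x ≥ 0) :
    (PowerSeries.mk fun n => L (2 * (n + 1)) (Real.sqrt x) s - 2 * s ^ (n + 1)) *
        (1 - PowerSeries.C (x + 3 * s) * PowerSeries.X +
          PowerSeries.C (s * (x + 3 * s)) * PowerSeries.X ^ 2 -
          PowerSeries.C (s ^ 3) * PowerSeries.X ^ 3) =
      PowerSeries.C x * (1 + PowerSeries.C s * PowerSeries.X) := by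
  set x' := Real.sqrt x with hx'def
  have hx2 : x' ^ 2 = x := Real.sq_sqrt hx
  set Z : ℕ → ℝ := fun n => L (2 * (n + 1)) x' s - 2 * s ^ (n + 1) with hZ
  have hrec : ∀ n, Z (n + 2) = (x + 2 * s) * Z (n + 1) - s ^ 2 * Z n + 2 * x * s ^ (n + 2) := by
    intro n
    have h4 : L (2 * n + 2 + 4) x' s
        = (x' ^ 2 + 2 * s) * L (2 * n + 2 + 2) x' s - s ^ 2 * L (2 * n + 2) x' s :=
      L_rec4 x' s (2 * n + 2)
    rw [hx2] at h4
    have e1 : 2 * (n + 2 + 1) = 2 * n + 2 + 4 := by ring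
    have e2 : 2 * (n + 1 + 1) = 2 * n + 2 + 2 := by ring
    simp only [hZ, e1, e2, h4]
    ring
  have cXk : ∀ (m k : ℕ), (coeff m) (PowerSeries.mk Z * X ^ k)
      = if k ≤ m then Z (m - k) else 0 := by
    intro m k
    rw [PowerSeries.coeff_mul_X_pow']
    split <;> simp
  have coeffL : ∀ m : ℕ, (coeff m)
      ((PowerSeries.mk Z) *
        (1 - PowerSeries.C (x + 3 * s) * PowerSeries.X +
          PowerSeries.C (s * (x + 3 * s)) * PowerSeries.X ^ 2 -
          PowerSeries.C (s ^ 3) * PowerSeries.X ^ 3)) =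
      Z m - (x + 3 * s) * (if 1 ≤ m then Z (m - 1) else 0)
        + (s * (x + 3 * s)) * (if 2 ≤ m then Z (m - 2) else 0)
        - s ^ 3 * (if 3 ≤ m then Z (m - 3) else 0) := by
    intro m
    have rearr : ∀ (a : ℝ) (k : ℕ), (PowerSeries.mk Z) * (PowerSeries.C a * X ^ k)
        = PowerSeries.C a * (PowerSeries.mk Z * X ^ k) := by intro a k; ring
    have rearr1 : ∀ a : ℝ, (PowerSeries.mk Z) * (PowerSeries.C a * X)
        = PowerSeries.C a * (PowerSeries.mk Z * X ^ 1) := by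
      intro a; rw [pow_one]; ring
    rw [mul_sub, mul_add, mul_sub, mul_one, rearr1, rearr, rearr]
    rw [map_sub (coeff m), map_add (coeff m), map_sub (coeff m)]
    simp only [coeff_C_mul, cXk, coeff_mk]
  ext n
  rw [coeffL]
  rcases n with _ | _ | _ | n
  · norm_num
    simp only [hZ]
    simp [L, ← hx2]
    ring
  · norm_num
    simp only [hZ]
    simp [L, ← hx2]
    ring
  · norm_num
    simp only [hZ]
    simp [L, ← hx2, coeff_C_mul, coeff_one, coeff_X]
    ring
  · have e1 : n + 1 + 1 + 1 - 1 = n + 2 := by omega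
    have e2 : n + 1 + 1 + 1 - 2 = n + 1 := by omega
    have e3 : n + 1 + 1 + 1 - 3 = n := by omega
    rw [if_pos (by omega), if_pos (by omega), if_pos (by omega), e1, e2, e3]
    have h1 := hrec n
    have h2 := hrec (n + 1)
    rw [show n + 1 + 2 = n + 3 by ring] at h2
    rw [show n + 1 + 1 + 1 = n + 3 by ring, h2, h1]
    simp [coeff_C_mul, coeff_one, coeff_X]
    ring
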